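/- For all r ≥ 2 and m ≥ 1, |Cyc_r(rm)| = (rm-1)_{r-1} · (rm-r+1) · |Cyc_r(rm-r)|, where (x)_m denotes the falling factorial. -/

import Mathlib

open Equiv Function List

set_option linter.unusedSectionVars false

variable {α : Type*} [Fintype α] [DecidableEq α]


variable {α : Type*} [Fintype α] [DecidableEq α] {β : Type*} [Fintype β] [DecidableEq β]

lemma perm_mem_periodicPts (σ : Equiv.Perm α) (x : α) : x ∈ periodicPts ⇑σ :=
  mk_mem_periodicPts (orderOf_pos σ) (by
    rw [IsPeriodicPt, IsFixedPt, Equiv.Perm.iterate_eq_pow, pow_orderOf_eq_one]; rfl)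

lemma perm_minimalPeriod_pos (σ : Equiv.Perm α) (x : α) : 0 < minimalPeriod ⇑σ x :=
  minimalPeriod_pos_of_mem_periodicPts (perm_mem_periodicPts σ x)

lemma minimalPeriod_eq_of_first_return {f : α → α} {x : α} {N : ℕ} (hN : 0 < N)
    (h1 : f^[N] x = x) (h2 : ∀ k, 0 < k → k < N → f^[k] x ≠ x) :
    minimalPeriod f x = N := by
  have hp : IsPeriodicPt f N x := h1
  have hle := hp.minimalPeriod_le hN
  have hpos := hp.minimalPeriod_pos hN
  rcases lt_or_eq_of_le hle with h | h
  · exact absurd (isPeriodicPt_minimalPeriod f x) (h2 _ hpos h)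
  · exact h

lemma permCongr_iterate (e : α ≃ β) (σ : Equiv.Perm α) (x : α) (k : ℕ) :
    (⇑(e.permCongr σ))^[k] (e x) = e ((⇑σ)^[k] x) := by
  induction k with
  | zero => rfl
  | succ k ih => rw [iterate_succ_apply', iterate_succ_apply', ih, permCongr_apply,
      Equiv.symm_apply_apply]

lemma minimalPeriod_permCongr (e : α ≃ β) (σ : Equiv.Perm α) (x : α) :
    minimalPeriod ⇑(e.permCongr σ) (e x) = minimalPeriod ⇑σ x := by
  rw [minimalPeriod_eq_minimalPeriod_iff]
  intro k
  constructor <;> intro h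
  · have := permCongr_iterate e σ x k
    rw [h] at this
    exact e.injective this.symm
  · show (⇑(e.permCongr σ))^[k] (e x) = e x
    rw [permCongr_iterate, h]

lemma card_cyc_congr (e : α ≃ β) (r : ℕ) :
    Nat.card {σ : Equiv.Perm α // ∀ x, r ∣ minimalPeriod ⇑σ x} =
      Nat.card {σ : Equiv.Perm β // ∀ x, r ∣ minimalPeriod ⇑σ x} := by
  apply Nat.card_congr
  refine Equiv.subtypeEquiv (Equiv.permCongr e) (fun σ => ?_)
  constructor
  · intro h y
    have := minimalPeriod_permCongr e σ (e.symm y)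
    rw [e.apply_symm_apply] at this
    rw [this]; exact h _
  · intro h x
    have := minimalPeriod_permCongr e σ x
    rw [← this]; exact h _
def blist {r : ℕ} (z : α) (e : Fin (r-1) ↪ {x : α // x ≠ z}) : List α :=
  z :: (List.ofFn fun i => (e i : α))

section Defs
variable {r : ℕ} (z : α) (e : Fin (r-1) ↪ {x : α // x ≠ z})

lemma blist_length : (blist z e).length = r - 1 + 1 := by simp [blist]

lemma blist_nodup : (blist z e).Nodup := by
  refine List.nodup_cons.mpr ⟨?_, ?_⟩
  · simp only [List.mem_ofFn]
    rintro ⟨i, hi⟩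
    exact (e i).2 hi
  · rw [List.nodup_ofFn]
    intro i j hij
    exact e.injective (Subtype.ext hij)

/-- `bfun k` is the `k`-th entry of the block list. -/
def bfun (k : ℕ) : α := (blist z e).getD k z

lemma bfun_zero : bfun z e 0 = z := rfl

lemma bfun_eq_getElem {k : ℕ} (hk : k < (blist z e).length) :
    bfun z e k = (blist z e)[k] := List.getD_eq_getElem _ _ hk

lemma bfun_succ (hr : 1 ≤ r) {k : ℕ} (hk : k + 1 < r) :
    bfun z e (k+1) = (e ⟨k, by omega⟩ : α) := by
  rw [bfun_eq_getElem z e (by rw [blist_length]; omega)]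
  simp [blist]

lemma bfun_mem (hr : 1 ≤ r) {k : ℕ} (hk : k < r) : bfun z e k ∈ blist z e := by
  rw [bfun_eq_getElem z e (by rw [blist_length]; omega)]
  exact List.getElem_mem _

lemma bfun_inj (hr : 1 ≤ r) {k l : ℕ} (hk : k < r) (hl : l < r)
    (h : bfun z e k = bfun z e l) : k = l := by
  rw [bfun_eq_getElem z e (by rw [blist_length]; omega),
    bfun_eq_getElem z e (by rw [blist_length]; omega)] at h
  exact ((blist_nodup z e).getElem_inj_iff).mp h

lemma bfun_ne_z (hr : 1 ≤ r) {k : ℕ} (hk : 0 < k) (hk' : k < r) : bfun z e k ≠ z := by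
  intro h
  have h2 : bfun z e k = bfun z e 0 := h
  exact absurd (bfun_inj z e hr hk' hr h2) (by omega)

lemma bfun_surj (hr : 1 ≤ r) {x : α} (hx : x ∈ blist z e) : ∃ k, k < r ∧ bfun z e k = x := by
  rw [List.mem_iff_getElem] at hx
  obtain ⟨k, hk, hkx⟩ := hx
  exact ⟨k, by rw [blist_length] at hk; omega, by rw [bfun_eq_getElem z e hk]; exact hkx⟩

def flist (b : Option {x : α // x ∉ blist z e}) : List α :=
  match b with
  | none => blist z e
  | some b₀ => blist z e ++ [(b₀ : α)]

lemma flist_nodup (b : Option {x : α // x ∉ blist z e}) : (flist z e b).Nodup := by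
  cases b with
  | none => exact blist_nodup z e
  | some b₀ =>
    rw [flist, List.nodup_append]
    exact ⟨blist_nodup z e, List.nodup_singleton _, by
      intro a ha b hb hab; rw [List.mem_singleton] at hb; subst hb; exact b₀.2 (hab ▸ ha)⟩

lemma mem_flist_none {x : α} : x ∈ flist z e none ↔ x ∈ blist z e := Iff.rfl

lemma mem_flist_some (b₀ : {x : α // x ∉ blist z e}) {x : α} :
    x ∈ flist z e (some b₀) ↔ x ∈ blist z e ∨ x = (b₀ : α) := by
  simp [flist]

lemma flist_length_none : (flist z e none).length = r - 1 + 1 := blist_length z e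

lemma flist_length_some (b₀) : (flist z e (some b₀)).length = r - 1 + 1 + 1 := by
  simp [flist, blist_length]

lemma flist_getElem_blist {k : ℕ} (b : Option {x : α // x ∉ blist z e})
    (hk : k < (blist z e).length) (hk' : k < (flist z e b).length) :
    (flist z e b)[k] = bfun z e k := by
  rw [bfun_eq_getElem z e hk]
  cases b with
  | none => rfl
  | some b₀ => exact List.getElem_append_left hk

lemma flist_getElem_last (b₀ : {x : α // x ∉ blist z e})
    (h : r - 1 + 1 < (flist z e (some b₀)).length) :
    (flist z e (some b₀))[r - 1 + 1] = (b₀ : α) := by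
  show (blist z e ++ [(b₀ : α)])[r-1+1] = _
  rw [List.getElem_append_right (bs := [(b₀ : α)]) (h₂ := h) (le_of_eq (blist_length z e))]
  simp [blist_length]

end Defs
section Gperm
variable {r : ℕ} (z : α) (e : Fin (r-1) ↪ {x : α // x ≠ z})
  (b : Option {x : α // x ∉ blist z e}) (τ : Equiv.Perm {x : α // x ∉ blist z e})

/-- the spliced permutation -/
def gperm : Equiv.Perm α := (flist z e b).formPerm * Equiv.Perm.ofSubtype τ

lemma gperm_bfun (hr : 1 ≤ r) {k : ℕ} (hk : k + 1 < r) :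
    gperm z e b τ (bfun z e k) = bfun z e (k+1) := by
  have hkb : k < (blist z e).length := by rw [blist_length]; omega
  have hkb' : k + 1 < (blist z e).length := by rw [blist_length]; omega
  have hkf : k < (flist z e b).length := by
    cases b with
    | none => exact hkb
    | some b₀ => rw [flist_length_some]; rw [blist_length] at hkb; omega
  rw [gperm, Equiv.Perm.mul_apply,
    Equiv.Perm.ofSubtype_apply_of_not_mem τ (by simpa using bfun_mem z e hr (by omega)),
    ← flist_getElem_blist z e b hkb hkf,
    List.formPerm_apply_getElem _ (flist_nodup z e b) k hkf]
  cases b with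
  | none =>
    have hlen : (flist z e none).length = r - 1 + 1 := flist_length_none z e
    have : (k+1) % (flist z e none).length = k + 1 := Nat.mod_eq_of_lt (by omega)
    simp only [this]
    exact flist_getElem_blist z e none hkb' (by omega)
  | some b₀ =>
    have hlen : (flist z e (some b₀)).length = r - 1 + 1 + 1 := flist_length_some z e b₀
    have : (k+1) % (flist z e (some b₀)).length = k + 1 := Nat.mod_eq_of_lt (by omega)
    simp only [this]
    exact flist_getElem_blist z e (some b₀) hkb' (by omega)

lemma gperm_last_none (hr : 1 ≤ r) :
    gperm z e none τ (bfun z e (r-1)) = z := by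
  have hkb : r - 1 < (blist z e).length := by rw [blist_length]; omega
  rw [gperm, Equiv.Perm.mul_apply,
    Equiv.Perm.ofSubtype_apply_of_not_mem τ (by simpa using bfun_mem z e hr (by omega)),
    ← flist_getElem_blist z e none hkb hkb,
    List.formPerm_apply_getElem _ (flist_nodup z e none) _ hkb]
  have hlen : (flist z e none).length = r - 1 + 1 := flist_length_none z e
  have : (r - 1 + 1) % (flist z e none).length = 0 := by rw [hlen]; simp
  simp only [this]
  exact (flist_getElem_blist z e none (by omega) (by omega)).trans (bfun_zero z e)

lemma gperm_last_some (hr : 1 ≤ r) (b₀ : {x : α // x ∉ blist z e}) :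
    gperm z e (some b₀) τ (bfun z e (r-1)) = (b₀ : α) := by
  have hkb : r - 1 < (blist z e).length := by rw [blist_length]; omega
  have hlen : (flist z e (some b₀)).length = r - 1 + 1 + 1 := flist_length_some z e b₀
  have hkf : r - 1 < (flist z e (some b₀)).length := by omega
  rw [gperm, Equiv.Perm.mul_apply,
    Equiv.Perm.ofSubtype_apply_of_not_mem τ (by simpa using bfun_mem z e hr (by omega)),
    ← flist_getElem_blist z e (some b₀) hkb hkf,
    List.formPerm_apply_getElem _ (flist_nodup z e (some b₀)) _ hkf]
  have : (r - 1 + 1) % (flist z e (some b₀)).length = r - 1 + 1 := Nat.mod_eq_of_lt (by omega)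
  simp only [this]
  exact flist_getElem_last z e b₀ (by omega)

lemma gperm_S_none (x : {x : α // x ∉ blist z e}) :
    gperm z e none τ (x : α) = (τ x : α) := by
  rw [gperm, Equiv.Perm.mul_apply, Equiv.Perm.ofSubtype_apply_of_mem τ x.2]
  simp only [Subtype.coe_eta]
  exact List.formPerm_apply_of_notMem (τ x).2

lemma gperm_S_some_ne (b₀ : {x : α // x ∉ blist z e}) (x : {x : α // x ∉ blist z e})
    (hx : τ x ≠ b₀) :
    gperm z e (some b₀) τ (x : α) = (τ x : α) := by
  rw [gperm, Equiv.Perm.mul_apply, Equiv.Perm.ofSubtype_apply_of_mem τ x.2]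
  simp only [Subtype.coe_eta]
  refine List.formPerm_apply_of_notMem ?_
  rw [mem_flist_some]
  push_neg
  exact ⟨(τ x).2, fun h => hx (Subtype.ext h)⟩

lemma gperm_S_some_eq (hr : 1 ≤ r) (b₀ : {x : α // x ∉ blist z e})
    (x : {x : α // x ∉ blist z e}) (hx : τ x = b₀) :
    gperm z e (some b₀) τ (x : α) = z := by
  rw [gperm, Equiv.Perm.mul_apply, Equiv.Perm.ofSubtype_apply_of_mem τ x.2]
  simp only [Subtype.coe_eta]
  rw [hx]
  have hlen : (flist z e (some b₀)).length = r - 1 + 1 + 1 := flist_length_some z e b₀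
  have hb : (b₀ : α) = (flist z e (some b₀))[r-1+1]'(by omega) :=
    (flist_getElem_last z e b₀ (by omega)).symm
  rw [hb, List.formPerm_apply_getElem _ (flist_nodup z e (some b₀)) _ (by omega)]
  have : (r - 1 + 1 + 1) % (flist z e (some b₀)).length = 0 := by rw [hlen]; simp
  simp only [this]
  exact (flist_getElem_blist z e (some b₀) (by rw [blist_length]; omega) (by omega)).trans
    (bfun_zero z e)

end Gperm
section Dyn
variable {r : ℕ} (z : α) (e : Fin (r-1) ↪ {x : α // x ≠ z})

lemma z_mem_blist : z ∈ blist z e := by rw [blist]; exact List.mem_cons_self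

variable (b : Option {x : α // x ∉ blist z e}) (τ : Equiv.Perm {x : α // x ∉ blist z e})

lemma gperm_iterate_bfun (hr : 1 ≤ r) {k : ℕ} (hk : k < r) :
    (⇑(gperm z e b τ))^[k] z = bfun z e k := by
  induction k with
  | zero => rfl
  | succ k ih =>
    rw [iterate_succ_apply', ih (by omega)]
    exact gperm_bfun z e b τ hr hk

lemma gperm_iterate_r_none (hr : 1 ≤ r) : (⇑(gperm z e none τ))^[r] z = z := by
  have h := Function.iterate_succ_apply' ⇑(gperm z e none τ) (r-1) z
  simp only [Nat.succ_eq_add_one] at h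
  rw [show r - 1 + 1 = r by omega] at h
  rw [h, gperm_iterate_bfun z e none τ hr (by omega)]
  exact gperm_last_none z e τ hr

lemma gperm_iterate_r_some (hr : 1 ≤ r) (b₀ : {x : α // x ∉ blist z e}) :
    (⇑(gperm z e (some b₀) τ))^[r] z = (b₀ : α) := by
  have h := Function.iterate_succ_apply' ⇑(gperm z e (some b₀) τ) (r-1) z
  simp only [Nat.succ_eq_add_one] at h
  rw [show r - 1 + 1 = r by omega] at h
  rw [h, gperm_iterate_bfun z e (some b₀) τ hr (by omega)]
  exact gperm_last_some z e τ hr b₀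

lemma minper_z_none (hr : 1 ≤ r) : minimalPeriod ⇑(gperm z e none τ) z = r := by
  refine minimalPeriod_eq_of_first_return (by omega) (gperm_iterate_r_none z e τ hr) ?_
  intro k hk hk'
  rw [gperm_iterate_bfun z e none τ hr hk']
  exact bfun_ne_z z e hr hk hk'

lemma gperm_iterate_S_none (x : {x : α // x ∉ blist z e}) (k : ℕ) :
    (⇑(gperm z e none τ))^[k] (x : α) = ((⇑τ)^[k] x : α) := by
  induction k with
  | zero => rfl
  | succ k ih => rw [iterate_succ_apply', iterate_succ_apply', ih, gperm_S_none]

lemma minper_S_none (x : {x : α // x ∉ blist z e}) :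
    minimalPeriod ⇑(gperm z e none τ) (x : α) = minimalPeriod ⇑τ x := by
  rw [minimalPeriod_eq_minimalPeriod_iff]
  intro k
  constructor <;> intro h
  · have h2 := gperm_iterate_S_none z e τ x k
    rw [h] at h2
    exact Subtype.ext h2.symm
  · show (⇑(gperm z e none τ))^[k] (x : α) = (x : α)
    rw [gperm_iterate_S_none, h]

lemma minper_blist_none (hr : 1 ≤ r) {x : α} (hx : x ∈ blist z e) :
    minimalPeriod ⇑(gperm z e none τ) x = r := by
  obtain ⟨k, hk, hkx⟩ := bfun_surj z e hr hx
  rw [← hkx, ← gperm_iterate_bfun z e none τ hr hk,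
    minimalPeriod_apply_iterate (perm_mem_periodicPts _ _) k]
  exact minper_z_none z e τ hr

lemma tau_orbit_mem (b₀ x : {x : α // x ∉ blist z e}) {k : ℕ} (hk : (⇑τ)^[k] x = b₀) :
    ∃ j, (⇑τ)^[j] b₀ = x := by
  set t := orderOf τ with ht
  have ht1 : 1 ≤ t := orderOf_pos τ
  have hid : (⇑τ)^[t] = id := by
    funext y
    rw [Equiv.Perm.iterate_eq_pow, pow_orderOf_eq_one]
    rfl
  refine ⟨t * k - k, ?_⟩
  rw [← hk, ← Function.iterate_add_apply]
  have h2 : t * k - k + k = t * k := by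
    have : k ≤ t * k := Nat.le_mul_of_pos_left k (by omega)
    omega
  rw [h2, Function.iterate_mul, hid]
  simp

lemma orbit_dichotomy (b₀ x : {x : α // x ∉ blist z e}) :
    (∃ j, (⇑τ)^[j] b₀ = x) ∨ (∀ k, (⇑τ)^[k] x ≠ b₀) := by
  by_cases hc : ∃ j, (⇑τ)^[j] b₀ = x
  · exact Or.inl hc
  · exact Or.inr fun k hk => hc (tau_orbit_mem z e τ b₀ x hk)

-- now the `some` case dynamics; L denotes the period of b₀ under τ
lemma tau_iter_ne_self {b₀ : {x : α // x ∉ blist z e}} {j : ℕ} (hj : 0 < j)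
    (hj' : j < minimalPeriod ⇑τ b₀) : (⇑τ)^[j] b₀ ≠ b₀ :=
  fun h => not_isPeriodicPt_of_pos_of_lt_minimalPeriod (by omega) hj' h

lemma gperm_iterate_some (hr : 1 ≤ r) (b₀ : {x : α // x ∉ blist z e}) {j : ℕ}
    (hj : j < minimalPeriod ⇑τ b₀) :
    (⇑(gperm z e (some b₀) τ))^[r + j] z = ((⇑τ)^[j] b₀ : α) := by
  induction j with
  | zero => exact gperm_iterate_r_some z e τ hr b₀
  | succ j ih =>
    rw [show r + (j+1) = (r+j)+1 by omega, iterate_succ_apply', ih (by omega)]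
    have hsucc := Function.iterate_succ_apply' ⇑τ j b₀
    rw [gperm_S_some_ne z e τ b₀ ((⇑τ)^[j] b₀)
      (by rw [← hsucc]; exact tau_iter_ne_self z e τ (by omega) hj)]
    rw [← hsucc]

lemma gperm_iterate_rL (hr : 1 ≤ r) (b₀ : {x : α // x ∉ blist z e}) :
    (⇑(gperm z e (some b₀) τ))^[r + minimalPeriod ⇑τ b₀] z = z := by
  set L := minimalPeriod ⇑τ b₀ with hL
  have hL1 : 1 ≤ L := perm_minimalPeriod_pos τ b₀
  rw [show r + L = (r + (L-1)) + 1 by omega, iterate_succ_apply',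
    gperm_iterate_some z e τ hr b₀ (by omega)]
  refine gperm_S_some_eq z e τ hr b₀ _ ?_
  have hsucc := Function.iterate_succ_apply' ⇑τ (L-1) b₀
  simp only [Nat.succ_eq_add_one] at hsucc
  rw [show L - 1 + 1 = L by omega] at hsucc
  rw [← hsucc, hL]
  exact iterate_minimalPeriod

lemma minper_z_some (hr : 1 ≤ r) (b₀ : {x : α // x ∉ blist z e}) :
    minimalPeriod ⇑(gperm z e (some b₀) τ) z = r + minimalPeriod ⇑τ b₀ := by
  set L := minimalPeriod ⇑τ b₀ with hL
  have hL1 : 1 ≤ L := perm_minimalPeriod_pos τ b₀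
  refine minimalPeriod_eq_of_first_return (by omega) (gperm_iterate_rL z e τ hr b₀) ?_
  intro k hk hk'
  by_cases hkr : k < r
  · rw [gperm_iterate_bfun z e (some b₀) τ hr hkr]
    exact bfun_ne_z z e hr hk hkr
  · have : k = r + (k - r) := by omega
    rw [this, gperm_iterate_some z e τ hr b₀ (by omega)]
    intro h
    have hmem := ((⇑τ)^[k-r] b₀).2
    rw [h] at hmem
    exact hmem (z_mem_blist z e)

lemma minper_blist_some (hr : 1 ≤ r) (b₀ : {x : α // x ∉ blist z e}) {x : α}
    (hx : x ∈ blist z e) :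
    minimalPeriod ⇑(gperm z e (some b₀) τ) x = r + minimalPeriod ⇑τ b₀ := by
  obtain ⟨k, hk, hkx⟩ := bfun_surj z e hr hx
  rw [← hkx, ← gperm_iterate_bfun z e (some b₀) τ hr hk,
    minimalPeriod_apply_iterate (perm_mem_periodicPts _ _) k]
  exact minper_z_some z e τ hr b₀

lemma minper_orbit_some (hr : 1 ≤ r) (b₀ : {x : α // x ∉ blist z e}) (j : ℕ) :
    minimalPeriod ⇑(gperm z e (some b₀) τ) ((⇑τ)^[j] b₀ : α) =
      r + minimalPeriod ⇑τ b₀ := by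
  set L := minimalPeriod ⇑τ b₀ with hL
  have hL1 : 1 ≤ L := perm_minimalPeriod_pos τ b₀
  have hmod : (⇑τ)^[j % L] b₀ = (⇑τ)^[j] b₀ := iterate_mod_minimalPeriod_eq
  rw [← hmod, ← gperm_iterate_some z e τ hr b₀ (Nat.mod_lt _ (by omega)),
    minimalPeriod_apply_iterate (perm_mem_periodicPts _ _),
    minper_z_some z e τ hr b₀]

lemma gperm_iterate_S_some (b₀ x : {x : α // x ∉ blist z e})
    (hx : ∀ k, (⇑τ)^[k] x ≠ b₀) (k : ℕ) :
    (⇑(gperm z e (some b₀) τ))^[k] (x : α) = ((⇑τ)^[k] x : α) := by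
  induction k with
  | zero => rfl
  | succ k ih =>
    rw [iterate_succ_apply', iterate_succ_apply', ih,
      gperm_S_some_ne z e τ b₀ ((⇑τ)^[k] x)
        (by have hsucc := Function.iterate_succ_apply' ⇑τ k x
            rw [← hsucc]; exact hx (k+1))]

lemma minper_S_some_notorbit (b₀ x : {x : α // x ∉ blist z e})
    (hx : ∀ k, (⇑τ)^[k] x ≠ b₀) :
    minimalPeriod ⇑(gperm z e (some b₀) τ) (x : α) = minimalPeriod ⇑τ x := by
  rw [minimalPeriod_eq_minimalPeriod_iff]
  intro k
  constructor <;> intro h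
  · have h2 := gperm_iterate_S_some z e τ b₀ x hx k
    rw [h] at h2
    exact Subtype.ext h2.symm
  · show (⇑(gperm z e (some b₀) τ))^[k] (x : α) = (x : α)
    rw [gperm_iterate_S_some z e τ b₀ x hx, h]

lemma minper_S_orbit (b₀ x : {x : α // x ∉ blist z e}) {j : ℕ} (hj : (⇑τ)^[j] b₀ = x) :
    minimalPeriod ⇑τ x = minimalPeriod ⇑τ b₀ := by
  rw [← hj, minimalPeriod_apply_iterate (perm_mem_periodicPts τ b₀) j]

/-- The key property transfer. -/
lemma gperm_P_iff (hr : 1 ≤ r) :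
    (∀ x : α, r ∣ minimalPeriod ⇑(gperm z e b τ) x) ↔
      (∀ y, r ∣ minimalPeriod ⇑τ y) := by
  cases b with
  | none =>
    constructor
    · intro h y
      rw [← minper_S_none z e τ y]
      exact h y
    · intro h x
      by_cases hx : x ∈ blist z e
      · rw [minper_blist_none z e τ hr hx]
      · rw [show x = ((⟨x, hx⟩ : {x : α // x ∉ blist z e}) : α) from rfl,
          minper_S_none z e τ ⟨x, hx⟩]
        exact h _
  | some b₀ =>
    have hz := minper_z_some z e τ hr b₀
    constructor
    · intro h y
      have hdvd : r ∣ r + minimalPeriod ⇑τ b₀ := hz ▸ h z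
      have hL : r ∣ minimalPeriod ⇑τ b₀ := (Nat.dvd_add_right (dvd_refl r)).mp hdvd
      rcases orbit_dichotomy z e τ b₀ y with ⟨j, hj⟩ | hk
      · rw [minper_S_orbit z e τ b₀ y hj]
        exact hL
      · rw [← minper_S_some_notorbit z e τ b₀ y hk]
        exact h y
    · intro h x
      have hdvd : r ∣ r + minimalPeriod ⇑τ b₀ := Nat.dvd_add (dvd_refl r) (h b₀)
      by_cases hx : x ∈ blist z e
      · rw [minper_blist_some z e τ hr b₀ hx]
        exact hdvd
      · rcases orbit_dichotomy z e τ b₀ ⟨x, hx⟩ with ⟨j, hj⟩ | hk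
        · rw [show x = ((⟨x, hx⟩ : {x : α // x ∉ blist z e}) : α) from rfl, ← hj,
            minper_orbit_some z e τ hr b₀ j]
          exact hdvd
        · rw [show x = ((⟨x, hx⟩ : {x : α // x ∉ blist z e}) : α) from rfl,
            minper_S_some_notorbit z e τ b₀ ⟨x, hx⟩ hk]
          exact h _

end Dyn
section Bij
variable {r : ℕ} (z : α)

/-- The data parametrizing permutations with all periods divisible by `r`. -/
def DataT (r : ℕ) (z : α) : Type _ :=
  Σ e : Fin (r-1) ↪ {x : α // x ≠ z},
    Option {x : α // x ∉ blist z e} ×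
      {τ : Equiv.Perm {x : α // x ∉ blist z e} // ∀ y, r ∣ minimalPeriod ⇑τ y}

def Gmap (hr : 1 ≤ r) :
    DataT r z → {σ : Equiv.Perm α // ∀ x, r ∣ minimalPeriod ⇑σ x} :=
  fun d => ⟨gperm z d.1 d.2.1 d.2.2.1, (gperm_P_iff z d.1 d.2.1 d.2.2.1 hr).mpr d.2.2.2⟩

lemma ofSubtype_inj {p : α → Prop} [DecidablePred p] {τ₁ τ₂ : Equiv.Perm (Subtype p)}
    (h : Equiv.Perm.ofSubtype τ₁ = Equiv.Perm.ofSubtype τ₂) : τ₁ = τ₂ := by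
  ext y
  have h2 := congrArg (fun π : Equiv.Perm α => π (y : α)) h
  simp only [Equiv.Perm.ofSubtype_apply_of_mem _ y.2, Subtype.coe_eta] at h2
  exact h2

lemma Gmap_inj (hr : 1 ≤ r) : Function.Injective (Gmap z hr) := by
  rintro ⟨e₁, b₁, τ₁, hτ₁⟩ ⟨e₂, b₂, τ₂, hτ₂⟩ h
  simp only [Gmap, Subtype.mk.injEq] at h
  have he : e₁ = e₂ := by
    ext i
    have h1 : ((e₁ i : α)) = bfun z e₁ ((i : ℕ)+1) := by
      rw [bfun_succ z e₁ hr (by omega)]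
    have h2 : ((e₂ i : α)) = bfun z e₂ ((i : ℕ)+1) := by
      rw [bfun_succ z e₂ hr (by omega)]
    rw [h1, h2, ← gperm_iterate_bfun z e₁ b₁ τ₁ hr (by omega),
      ← gperm_iterate_bfun z e₂ b₂ τ₂ hr (by omega), h]
  subst he
  have hb : b₁ = b₂ := by
    cases b₁ with
    | none =>
      cases b₂ with
      | none => rfl
      | some b₀ =>
        have h1 := gperm_iterate_r_none z e₁ τ₁ hr
        have h2 := gperm_iterate_r_some z e₁ τ₂ hr b₀
        rw [h] at h1
        rw [h1] at h2
        exact absurd (h2 ▸ z_mem_blist z e₁) b₀.2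
    | some b₀ =>
      cases b₂ with
      | none =>
        have h1 := gperm_iterate_r_some z e₁ τ₁ hr b₀
        have h2 := gperm_iterate_r_none z e₁ τ₂ hr
        rw [h] at h1
        rw [h2] at h1
        exact absurd (h1 ▸ z_mem_blist z e₁) b₀.2
      | some b₀' =>
        have h1 := gperm_iterate_r_some z e₁ τ₁ hr b₀
        have h2 := gperm_iterate_r_some z e₁ τ₂ hr b₀'
        rw [h] at h1
        rw [h1] at h2
        exact congrArg some (Subtype.ext h2)
  subst hb
  have hτ : τ₁ = τ₂ := by
    rw [gperm, gperm] at h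
    exact ofSubtype_inj (mul_left_cancel h)
  subst hτ
  rfl

lemma build_tau (hr : 1 ≤ r) (e : Fin (r-1) ↪ {x : α // x ≠ z})
    (b : Option {x : α // x ∉ blist z e}) (σ : Equiv.Perm α)
    (hform : ∀ x ∈ blist z e, (flist z e b).formPerm x = σ x) :
    ∃ τ, gperm z e b τ = σ := by
  set f := (flist z e b).formPerm with hf
  set g := f⁻¹ * σ with hg
  have hfix : ∀ x ∈ blist z e, g x = x := by
    intro x hx
    rw [hg, Equiv.Perm.mul_apply, ← hform x hx]
    exact f.symm_apply_apply x
  have hiff : ∀ x, x ∉ blist z e ↔ g x ∉ blist z e := by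
    intro x
    constructor
    · intro hx hmem
      have h1 := hfix _ hmem
      have h2 := g.injective h1
      rw [h2] at hmem
      exact hx hmem
    · intro hx
      by_contra hmem
      exact hx (by rw [hfix x hmem]; exact hmem)
  refine ⟨g.subtypePerm (fun x => (hiff x).symm), ?_⟩
  rw [gperm, Equiv.Perm.ofSubtype_subtypePerm (fun x => (hiff x).symm)
    (fun x hxne => by by_contra hmem; exact hxne (hfix x hmem))]
  rw [hg]
  exact mul_inv_cancel_left f σ

lemma formPerm_eq_gperm_one (e : Fin (r-1) ↪ {x : α // x ≠ z})
    (b : Option {x : α // x ∉ blist z e}) :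
    (flist z e b).formPerm = gperm z e b 1 := by
  rw [gperm, map_one, mul_one]

lemma Gmap_surj (hr : 1 ≤ r) : Function.Surjective (Gmap z hr) := by
  rintro ⟨σ, hσ⟩
  have hper : ∀ x, r ≤ minimalPeriod ⇑σ x :=
    fun x => Nat.le_of_dvd (perm_minimalPeriod_pos σ x) (hσ x)
  have hperz := hper z
  -- the embedding
  have hne : ∀ i : Fin (r-1), (⇑σ)^[(i : ℕ)+1] z ≠ z := by
    intro i hiz
    have h0 : (⇑σ)^[(i : ℕ)+1] z = (⇑σ)^[0] z := hiz
    have := (iterate_eq_iterate_iff_of_lt_minimalPeriod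
      (x := z) (by omega) (by omega)).mp h0
    omega
  set e : Fin (r-1) ↪ {x : α // x ≠ z} :=
    ⟨fun i => ⟨(⇑σ)^[(i : ℕ)+1] z, hne i⟩, by
      intro i j hij
      have := (iterate_eq_iterate_iff_of_lt_minimalPeriod
        (x := z) (show (i : ℕ)+1 < minimalPeriod ⇑σ z by omega)
        (show (j : ℕ)+1 < minimalPeriod ⇑σ z by omega)).mp (congrArg Subtype.val hij)
      exact Fin.ext (by omega)⟩ with hedef
  have hbfun : ∀ k, k < r → bfun z e k = (⇑σ)^[k] z := by
    intro k hk
    cases k with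
    | zero => rfl
    | succ k => rw [bfun_succ z e hr hk]; rfl
  have hform_lt : ∀ (b : Option {x : α // x ∉ blist z e}) k, k + 1 < r →
      (flist z e b).formPerm (bfun z e k) = σ (bfun z e k) := by
    intro b k hk
    rw [formPerm_eq_gperm_one z e b, gperm_bfun z e b 1 hr hk,
      hbfun k (by omega), hbfun (k+1) (by omega), Function.iterate_succ_apply']
  -- the optional re-entry point
  by_cases hb : (⇑σ)^[r] z = z
  · -- closed case
    have hform : ∀ x ∈ blist z e, (flist z e none).formPerm x = σ x := by
      intro x hx
      obtain ⟨k, hk, hkx⟩ := bfun_surj z e hr hx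
      rw [← hkx]
      rcases Nat.lt_or_ge (k+1) r with hk1 | hk1
      · exact hform_lt none k hk1
      · have hkr : k = r - 1 := by omega
        subst hkr
        have hsucc := Function.iterate_succ_apply' (⇑σ) (r-1) z
        simp only [Nat.succ_eq_add_one] at hsucc
        rw [show r - 1 + 1 = r by omega] at hsucc
        rw [formPerm_eq_gperm_one z e none, gperm_last_none z e 1 hr,
          hbfun (r-1) (by omega), ← hsucc, hb]
    obtain ⟨τ, hgp⟩ := build_tau z hr e none σ hform
    have hP : ∀ y, r ∣ minimalPeriod ⇑τ y :=
      (gperm_P_iff z e none τ hr).mp (by rw [hgp]; exact hσ)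
    exact ⟨⟨e, none, ⟨τ, hP⟩⟩, Subtype.ext hgp⟩
  · -- open case
    have hrlt : r < minimalPeriod ⇑σ z := by
      rcases Nat.lt_or_ge r (minimalPeriod ⇑σ z) with h | h
      · exact h
      · exfalso
        have heq : minimalPeriod ⇑σ z = r := by omega
        exact hb (heq ▸ iterate_minimalPeriod)
    have hnot : (⇑σ)^[r] z ∉ blist z e := by
      intro hmem
      obtain ⟨k, hk, hkx⟩ := bfun_surj z e hr hmem
      rw [hbfun k (by omega)] at hkx
      have := (iterate_eq_iterate_iff_of_lt_minimalPeriod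
        (x := z) (show k < minimalPeriod ⇑σ z by omega) hrlt).mp hkx
      omega
    set b₀ : {x : α // x ∉ blist z e} := ⟨(⇑σ)^[r] z, hnot⟩ with hb₀
    have hform : ∀ x ∈ blist z e, (flist z e (some b₀)).formPerm x = σ x := by
      intro x hx
      obtain ⟨k, hk, hkx⟩ := bfun_surj z e hr hx
      rw [← hkx]
      rcases Nat.lt_or_ge (k+1) r with hk1 | hk1
      · exact hform_lt (some b₀) k hk1
      · have hkr : k = r - 1 := by omega
        subst hkr
        have hsucc := Function.iterate_succ_apply' (⇑σ) (r-1) z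
        simp only [Nat.succ_eq_add_one] at hsucc
        rw [show r - 1 + 1 = r by omega] at hsucc
        rw [formPerm_eq_gperm_one z e (some b₀), gperm_last_some z e 1 hr b₀,
          hbfun (r-1) (by omega), ← hsucc]
    obtain ⟨τ, hgp⟩ := build_tau z hr e (some b₀) σ hform
    have hP : ∀ y, r ∣ minimalPeriod ⇑τ y :=
      (gperm_P_iff z e (some b₀) τ hr).mp (by rw [hgp]; exact hσ)
    exact ⟨⟨e, some b₀, ⟨τ, hP⟩⟩, Subtype.ext hgp⟩

end Bij
section Count

lemma nat_card_sigma {ι : Type*} [Fintype ι] (β : ι → Type*) [∀ i, Finite (β i)] :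
    Nat.card (Σ i, β i) = ∑ i, Nat.card (β i) := by
  letI := fun i => Fintype.ofFinite (β i)
  simp [Nat.card_eq_fintype_card]

lemma card_S {r : ℕ} (hr : 1 ≤ r) {n : ℕ} (hcard : Fintype.card α = n) (z : α)
    (e : Fin (r-1) ↪ {x : α // x ≠ z}) :
    Fintype.card {x : α // x ∉ blist z e} = n - r := by
  have h1 : Fintype.card {x : α // x ∈ blist z e} = r := by
    rw [Fintype.card_of_subtype (blist z e).toFinset (by simp)]
    rw [List.toFinset_card_of_nodup (blist_nodup z e), blist_length]
    omega
  have := Fintype.card_subtype_compl (fun x : α => x ∈ blist z e)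
  rw [h1, hcard] at this
  exact this

lemma card_step {r : ℕ} (hr : 1 ≤ r) {n : ℕ} (hcard : Fintype.card α = n) (z : α) :
    Nat.card {σ : Equiv.Perm α // ∀ x, r ∣ minimalPeriod ⇑σ x} =
      (n-1).descFactorial (r-1) * ((n - r + 1) *
        Nat.card {σ : Equiv.Perm (Fin (n - r)) // ∀ x, r ∣ minimalPeriod ⇑σ x}) := by
  rw [← Nat.card_eq_of_bijective (Gmap z hr) ⟨Gmap_inj z hr, Gmap_surj z hr⟩]
  rw [DataT, nat_card_sigma]
  have hfiber : ∀ e : Fin (r-1) ↪ {x : α // x ≠ z},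
      Nat.card (Option {x : α // x ∉ blist z e} ×
        {τ : Equiv.Perm {x : α // x ∉ blist z e} // ∀ y, r ∣ minimalPeriod ⇑τ y}) =
      (n - r + 1) *
        Nat.card {σ : Equiv.Perm (Fin (n - r)) // ∀ x, r ∣ minimalPeriod ⇑σ x} := by
    intro e
    rw [Nat.card_prod]
    congr 1
    · rw [Nat.card_eq_fintype_card, Fintype.card_option, card_S hr hcard z e]
    · exact card_cyc_congr (Fintype.equivFinOfCardEq (card_S hr hcard z e)) r
  simp only [hfiber]
  rw [Finset.sum_const, Finset.card_univ, Fintype.card_embedding_eq, smul_eq_mul]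
  congr 2
  · have := Fintype.card_subtype_compl (fun x : α => x = z)
    rw [Fintype.card_subtype_eq z, hcard] at this
    exact this
  · exact Fintype.card_fin _

end Count
/-- `|Cyc_r(rm)| = (rm-1)_{r-1} · (rm-r+1) · |Cyc_r(rm-r)|`. -/
theorem stmt13 (r m : ℕ) (hr : 2 ≤ r) (hm : 1 ≤ m) :
    Nat.card {σ : Equiv.Perm (Fin (r * m)) //
        ∀ x, r ∣ Function.minimalPeriod ⇑σ x} =
      Nat.descFactorial (r * m - 1) (r - 1) * (r * m - r + 1) *
        Nat.card {σ : Equiv.Perm (Fin (r * m - r)) //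
          ∀ x, r ∣ Function.minimalPeriod ⇑σ x} := by
  have hn : 0 < r * m := by
    have := Nat.mul_le_mul hr hm
    omega
  have h := card_step (α := Fin (r * m)) (r := r) (by omega)
    (Fintype.card_fin (r * m)) ⟨0, hn⟩
  rw [h, mul_assoc]
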